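/- Let r ≥ 1 and let G be a B_{r+1}-free graph. Let u* be any vertex of G, and set A = N_G(u*) and B = V(G) \ (A ∪ {u*}). Then the number of non-edges between A and B satisfies |A||B| − e(A,B) ≥ (1/r) · e(A) · (|B| − r + 1), where e(A) is the number of edges inside A and e(A,B) the number of edges between A and B. -/

import Mathlib

open SimpleGraph Finset

attribute [local instance] Classical.propDecidable

/-- The spectral radius (largest adjacency eigenvalue) of a graph on `Fin n`. -/
noncomputable def adjSpectralRadius {n : ℕ} (G : SimpleGraph (Fin n)) : ℝ :=
  sSup (spectrum ℝ (G.adjMatrix ℝ))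

/-- `G` contains a copy of `H` (a subgraph isomorphic to `H`). -/
def Contains {α β : Type*} (G : SimpleGraph α) (H : SimpleGraph β) : Prop :=
  ∃ f : β ↪ α, ∀ a b, H.Adj a b → G.Adj (f a) (f b)

/-- The book `B_s`: `s` triangles sharing a common edge, i.e. `K_{2,s}` plus the
edge inside the part of size two. -/
def book (s : ℕ) : SimpleGraph (Fin 2 ⊕ Fin s) :=
  SimpleGraph.fromRel (fun x _ => x.isLeft = true)

/-- The theta graph `θ_{r+1} = θ(1,2,r+1)`: vertices `0,…,r+1` form a path of length
`r+1`, the edge `0 ~ (r+1)`, and vertex `r+2` is adjacent to `0` and `r+1`. -/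
def theta (r : ℕ) : SimpleGraph (Fin (r + 3)) :=
  SimpleGraph.fromRel (fun x y =>
    (x.val + 1 = y.val ∧ y.val ≤ r + 1) ∨
    (x.val = 0 ∧ y.val = r + 1) ∨
    (x.val = r + 2 ∧ (y.val = 0 ∨ y.val = r + 1)))

/-- The number of edges of a graph. -/
noncomputable def edgeCount {V : Type*} (G : SimpleGraph V) : ℕ := G.edgeSet.ncard

/-- The number of ordered pairs `(a,b) ∈ s × t` with `a ~ b`.  For disjoint `s` and `t`
this is the number `e(s,t)` of edges between `s` and `t`; for `s = t` it is `2·e(s)`. -/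
noncomputable def ordPairs {V : Type*} (G : SimpleGraph V) (s t : Finset V) : ℕ :=
  ((s ×ˢ t).filter fun p => G.Adj p.1 p.2).card

/-- The number of edges inside a vertex subset `s`. -/
noncomputable def edgesIn {V : Type*} (G : SimpleGraph V) (s : Finset V) : ℕ :=
  (G.induce (s : Set V)).edgeSet.ncard

section Helpers

lemma codeg_le {V : Type*} [Fintype V] [DecidableEq V] {r : ℕ}
    {G : SimpleGraph V} (hfree : ¬ Contains G (book (r + 1))) {x y : V}
    (hxy : G.Adj x y) :
    (G.neighborFinset x ∩ G.neighborFinset y).card ≤ r := by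
  by_contra h
  push_neg at h
  obtain ⟨T, hTsub, hTcard⟩ :=
    Finset.exists_subset_card_eq (s := G.neighborFinset x ∩ G.neighborFinset y) (n := r + 1) h
  have hT : ∀ t ∈ T, G.Adj x t ∧ G.Adj y t := by
    intro t ht
    have := hTsub ht
    simp only [Finset.mem_inter, mem_neighborFinset] at this
    exact this
  let e := Finset.equivFinOfCardEq hTcard
  let f : Fin 2 ⊕ Fin (r + 1) → V := Sum.elim ![x, y] (fun j => ((e.symm j : T) : V))
  have hne : ∀ t ∈ T, t ≠ x ∧ t ≠ y := by
    intro t ht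
    exact ⟨fun h' => (hT t ht).1.ne' (h' ▸ rfl), fun h' => (hT t ht).2.ne' (h' ▸ rfl)⟩
  have hinj : Function.Injective f := by
    rintro (a | a) (b | b) hab
    · simp only [f, Sum.elim_inl] at hab
      fin_cases a <;> fin_cases b <;> simp_all [hxy.ne]
    · exfalso
      simp only [f, Sum.elim_inl, Sum.elim_inr] at hab
      have hm := (e.symm b).2
      have h2 := hne _ hm
      fin_cases a <;> simp_all
    · exfalso
      simp only [f, Sum.elim_inl, Sum.elim_inr] at hab
      have hm := (e.symm a).2
      have h2 := hne _ hm
      fin_cases b <;> simp_all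
    · simp only [f, Sum.elim_inr] at hab
      have := e.symm.injective (Subtype.ext hab)
      exact congrArg Sum.inr this
  apply hfree
  refine ⟨⟨f, hinj⟩, ?_⟩
  rintro (a | a) (b | b) hab <;>
    simp only [book, SimpleGraph.fromRel_adj, Sum.isLeft, ne_eq] at hab
  · have hab2 : a ≠ b := fun h => hab.1 (by rw [h])
    simp only [Function.Embedding.coeFn_mk, f, Sum.elim_inl]
    fin_cases a <;> fin_cases b <;> first | exact absurd rfl hab2 | exact hxy | exact hxy.symm
  · have hm := (e.symm b).2
    simp only [Function.Embedding.coeFn_mk, f, Sum.elim_inl, Sum.elim_inr]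
    fin_cases a
    · exact (hT _ hm).1
    · exact (hT _ hm).2
  · have hm := (e.symm a).2
    simp only [Function.Embedding.coeFn_mk, f, Sum.elim_inl, Sum.elim_inr]
    fin_cases b
    · exact ((hT _ hm).1).symm
    · exact ((hT _ hm).2).symm
  · simp at hab

lemma ordPairs_eq_sum {V : Type*} (G : SimpleGraph V) (A B : Finset V) :
    ordPairs G A B = ∑ x ∈ A, (B.filter fun b => G.Adj x b).card := by
  rw [ordPairs, Finset.card_filter, Finset.sum_product]
  exact Finset.sum_congr rfl fun x _ => (Finset.card_filter _ _).symm

lemma two_mul_edgesIn {V : Type*} (G : SimpleGraph V) (A : Finset V) :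
    2 * edgesIn G A = ordPairs G A A := by
  have h1 : edgesIn G A = (G.induce (↑A : Set V)).edgeFinset.card :=
    Set.ncard_eq_toFinset_card' _
  rw [h1, SimpleGraph.two_mul_card_edgeFinset, ordPairs]
  refine Finset.card_bij' (fun p _ => ((↑p.1 : V), (↑p.2 : V)))
    (fun p hp => (⟨p.1, by simp only [Finset.mem_filter, Finset.mem_product] at hp
                           exact hp.1.1⟩,
                  ⟨p.2, by simp only [Finset.mem_filter, Finset.mem_product] at hp
                           exact hp.1.2⟩)) ?_ ?_ ?_ ?_
  · rintro ⟨a, b⟩ hp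
    simp only [Finset.mem_filter, Finset.mem_univ, true_and] at hp
    simp only [Finset.mem_filter, Finset.mem_product]
    exact ⟨⟨a.2, b.2⟩, hp⟩
  · rintro ⟨a, b⟩ hp
    simp only [Finset.mem_filter, Finset.mem_product] at hp
    simp only [Finset.mem_filter, Finset.mem_univ, true_and]
    exact hp.2
  · rintro ⟨a, b⟩ _; rfl
  · rintro ⟨a, b⟩ _; rfl

end Helpers

/-- Claim 3.4: in a `B_{r+1}`-free graph, with `A = N_G(u*)` and `B = V ∖ (A ∪ {u*})`,
the number of non-edges between `A` and `B` satisfies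
`|A||B| - e(A,B) ≥ (1/r)·e(A)·(|B| - r + 1)`. -/
theorem stmt17 {V : Type*} [Fintype V] [DecidableEq V] (r : ℕ) (hr : 1 ≤ r)
    (G : SimpleGraph V) (hfree : ¬ Contains G (book (r + 1))) (u : V) :
    (1 : ℝ) / r * (edgesIn G (G.neighborFinset u)) *
        (((Finset.univ \ insert u (G.neighborFinset u)).card : ℝ) - r + 1) ≤
      ((G.neighborFinset u).card : ℝ) *
          ((Finset.univ \ insert u (G.neighborFinset u)).card : ℝ) -
        (ordPairs G (G.neighborFinset u)
          (Finset.univ \ insert u (G.neighborFinset u)) : ℝ) := by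
  set A := G.neighborFinset u with hA
  set B := Finset.univ \ insert u A with hB
  have huB : u ∉ B := by simp [hB]
  have hAdj : ∀ x ∈ A, G.Adj u x := fun x hx => by
    rwa [hA, mem_neighborFinset] at hx
  have degA : ∀ x ∈ A, (A.filter fun z => G.Adj x z).card ≤ r := by
    intro x hx
    refine le_trans (Finset.card_le_card (fun z hz => ?_)) (codeg_le hfree (hAdj x hx))
    simp only [Finset.mem_filter] at hz
    simp only [Finset.mem_inter, mem_neighborFinset]
    exact ⟨hAdj z hz.1, hz.2⟩
  have degA' : ∀ y ∈ A, (A.filter fun z => G.Adj z y).card ≤ r := by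
    intro y hy
    refine le_trans (Finset.card_le_card (fun z hz => ?_)) (codeg_le hfree (hAdj y hy))
    simp only [Finset.mem_filter] at hz
    simp only [Finset.mem_inter, mem_neighborFinset]
    exact ⟨hAdj z hz.1, hz.2.symm⟩
  set n : V → ℤ := fun x => ((B \ G.neighborFinset x).card : ℤ) with hn
  have key : ∀ x ∈ A, ∀ y ∈ A, G.Adj x y →
      (B.card : ℤ) - r + 1 ≤ n x + n y := by
    intro x hx y hy hxy
    have hcd := codeg_le hfree hxy
    set C := B ∩ (G.neighborFinset x ∩ G.neighborFinset y) with hC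
    have hu : u ∈ G.neighborFinset x ∩ G.neighborFinset y := by
      simp only [Finset.mem_inter, mem_neighborFinset]
      exact ⟨(hAdj x hx).symm, (hAdj y hy).symm⟩
    have huC : u ∉ C := fun h => huB (Finset.mem_inter.1 h).1
    have h2 : insert u C ⊆ G.neighborFinset x ∩ G.neighborFinset y := by
      intro z hz
      rcases Finset.mem_insert.1 hz with rfl | hz'
      · exact hu
      · exact (Finset.mem_inter.1 hz').2
    have h3 : C.card + 1 ≤ r := by
      have := Finset.card_le_card h2
      rw [Finset.card_insert_of_notMem huC] at this
      omega
    have h4 : C.card + (B \ (G.neighborFinset x ∩ G.neighborFinset y)).card = B.card :=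
      Finset.card_inter_add_card_sdiff B _
    have h5 : B \ (G.neighborFinset x ∩ G.neighborFinset y) ⊆
        (B \ G.neighborFinset x) ∪ (B \ G.neighborFinset y) := by
      intro z hz
      simp only [Finset.mem_sdiff, Finset.mem_inter, Finset.mem_union] at hz ⊢
      tauto
    have h6 := Finset.card_le_card h5
    have h7 := Finset.card_union_le (B \ G.neighborFinset x) (B \ G.neighborFinset y)
    simp only [hn]
    omega
  set P := (A ×ˢ A).filter (fun p => G.Adj p.1 p.2) with hP
  have hS1 : (P.card : ℤ) * ((B.card : ℤ) - r + 1) ≤ ∑ p ∈ P, (n p.1 + n p.2) := by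
    have := Finset.card_nsmul_le_sum P (fun p => n p.1 + n p.2) ((B.card : ℤ) - r + 1)
      (fun p hp => by
        simp only [hP, Finset.mem_filter, Finset.mem_product] at hp
        exact key _ hp.1.1 _ hp.1.2 hp.2)
    rwa [nsmul_eq_mul] at this
  have hsplit : ∑ p ∈ P, (n p.1 + n p.2) =
      (∑ x ∈ A, ((A.filter fun z => G.Adj x z).card : ℤ) * n x) +
      (∑ y ∈ A, ((A.filter fun z => G.Adj z y).card : ℤ) * n y) := by
    rw [Finset.sum_add_distrib]
    congr 1
    · rw [hP, Finset.sum_filter, Finset.sum_product]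
      refine Finset.sum_congr rfl fun x _ => ?_
      rw [← Finset.sum_filter]
      have h0 : ∑ a ∈ A.filter (fun a => G.Adj (x, a).1 (x, a).2), n (x, a).1
          = ∑ _a ∈ A.filter (fun z => G.Adj x z), n x := rfl
      rw [h0, Finset.sum_const, nsmul_eq_mul]
    · rw [hP, Finset.sum_filter, Finset.sum_product_right]
      refine Finset.sum_congr rfl fun y _ => ?_
      rw [← Finset.sum_filter]
      have h0 : ∑ a ∈ A.filter (fun a => G.Adj (a, y).1 (a, y).2), n (a, y).2
          = ∑ _a ∈ A.filter (fun z => G.Adj z y), n y := rfl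
      rw [h0, Finset.sum_const, nsmul_eq_mul]
  have hnn : ∀ x, 0 ≤ n x := fun x => Int.natCast_nonneg _
  have hbound1 : ∑ x ∈ A, ((A.filter fun z => G.Adj x z).card : ℤ) * n x ≤
      r * ∑ x ∈ A, n x := by
    rw [Finset.mul_sum]
    exact Finset.sum_le_sum fun x hx =>
      mul_le_mul_of_nonneg_right (by exact_mod_cast degA x hx) (hnn x)
  have hbound2 : ∑ y ∈ A, ((A.filter fun z => G.Adj z y).card : ℤ) * n y ≤
      r * ∑ x ∈ A, n x := by
    rw [Finset.mul_sum]
    exact Finset.sum_le_sum fun y hy =>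
      mul_le_mul_of_nonneg_right (by exact_mod_cast degA' y hy) (hnn y)
  have hSval : ∑ x ∈ A, n x = (A.card : ℤ) * B.card - ordPairs G A B := by
    have hterm : ∀ x ∈ A, n x = (B.card : ℤ) - ((B.filter fun b => G.Adj x b).card : ℤ) := by
      intro x _
      have h1 : B ∩ G.neighborFinset x = B.filter fun b => G.Adj x b := by
        ext b
        simp [mem_neighborFinset, Finset.mem_filter]
      have h2 := Finset.card_inter_add_card_sdiff B (G.neighborFinset x)
      rw [h1] at h2
      simp only [hn]
      omega
    rw [Finset.sum_congr rfl hterm, Finset.sum_sub_distrib, Finset.sum_const,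
      ordPairs_eq_sum]
    push_cast
    ring
  have hPcard : (P.card : ℤ) = 2 * edgesIn G A := by
    have := two_mul_edgesIn G A
    rw [ordPairs] at this
    exact_mod_cast this.symm
  have hfinal : 2 * (edgesIn G A : ℤ) * ((B.card : ℤ) - r + 1) ≤
      2 * r * ((A.card : ℤ) * B.card - ordPairs G A B) := by
    rw [← hPcard]
    calc (P.card : ℤ) * ((B.card : ℤ) - r + 1) ≤ ∑ p ∈ P, (n p.1 + n p.2) := hS1
      _ ≤ 2 * r * ((A.card : ℤ) * B.card - ordPairs G A B) := by
        rw [hsplit, ← hSval]; linarith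
  have hrpos : (0 : ℝ) < r := by exact_mod_cast hr
  have hreal : 2 * (edgesIn G A : ℝ) * ((B.card : ℝ) - r + 1) ≤
      2 * r * ((A.card : ℝ) * B.card - ordPairs G A B) := by
    exact_mod_cast hfinal
  rw [div_mul_eq_mul_div, div_mul_eq_mul_div, div_le_iff₀ hrpos]
  nlinarith [hreal]
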